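/- Let φ_1, ..., φ_n be unit norm vectors in ℂ^d with d ≥ 1, and let P = {w ∈ ℝ^n : w_i ≥ 0 for all i, and Σ_{i=1}^n w_i φ_iφ_i* = (1/d)·I_d}. If w ∈ P is such that no proper subset of {φ_i : w_i > 0} is scalable, then w is an extreme point (vertex) of P. -/

import Mathlib

/-- The outer product `x x*` of a vector `x ∈ ℂ^d` with itself:
the `d × d` matrix whose `(j,k)` entry is `x j * conj (x k)`. -/
def outer {d : ℕ} (x : EuclideanSpace ℂ (Fin d)) : Matrix (Fin d) (Fin d) ℂ :=
  Matrix.of fun j k => x j * starRingEnd ℂ (x k)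

/-- Let `P = {w ∈ ℝ^n : w ≥ 0, Σ w_i φ_i φ_i* = (1/d) I_d}` for unit norm vectors
`φ_i ∈ ℂ^d`. If `w ∈ P` and no proper subset of `{φ_i : w_i > 0}` is scalable, then
`w` is an extreme point of `P`. -/
lemma trace_outer_eq_one {d : ℕ} (x : EuclideanSpace ℂ (Fin d)) (hx : ‖x‖ = 1) :
    (outer x).trace = 1 := by
  have h : (outer x).trace = ∑ j, (Complex.normSq (x j) : ℂ) := by
    simp [Matrix.trace, outer, Matrix.diag, Complex.mul_conj]
  have h2 : ∑ j, ‖x j‖ ^ 2 = 1 := by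
    have h3 := hx
    rw [EuclideanSpace.norm_eq] at h3
    have hnn : (0:ℝ) ≤ ∑ j, ‖x j‖ ^ 2 := Finset.sum_nonneg fun j _ => sq_nonneg _
    nlinarith [Real.sq_sqrt hnn]
  have h4 : ∑ j, Complex.normSq (x j) = 1 := by
    have : ∀ j : Fin d, Complex.normSq (x j) = ‖x j‖ ^ 2 := fun j => by
      exact Complex.normSq_eq_norm_sq _
    rw [Finset.sum_congr rfl fun j _ => this j]
    exact h2
  rw [h]
  exact_mod_cast h4

theorem stmt11 {d n : ℕ} (hd : 1 ≤ d) (φ : Fin n → EuclideanSpace ℂ (Fin d))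
    (hφ : ∀ i, ‖φ i‖ = 1) (w : Fin n → ℝ) (hw : ∀ i, 0 ≤ w i)
    (hsum : ∑ i, w i • outer (φ i) = (d : ℝ)⁻¹ • (1 : Matrix (Fin d) (Fin d) ℂ))
    (hmin : ∀ I : Finset (Fin n), (I : Set (Fin n)) ⊂ {i | 0 < w i} →
        ¬ ∃ v : Fin n → ℝ, (∀ i, 0 ≤ v i) ∧
            ∑ i ∈ I, v i • outer (φ i) = (1 : Matrix (Fin d) (Fin d) ℂ)) :
    w ∈ Set.extremePoints ℝ
        {v : Fin n → ℝ | (∀ i, 0 ≤ v i) ∧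
          ∑ i, v i • outer (φ i) = (d : ℝ)⁻¹ • (1 : Matrix (Fin d) (Fin d) ℂ)} := by
  refine ⟨⟨hw, hsum⟩, ?_⟩
  rintro x1 ⟨hx1, hs1⟩ x2 ⟨hx2, hs2⟩ ⟨a, b, ha, hb, hab, hseg⟩
  by_contra hne
  have hx12 : x1 ≠ x2 := by
    rintro rfl
    have : x1 = w := by
      rw [← hseg, ← add_smul, hab, one_smul]
    exact hne this
  set u : Fin n → ℝ := fun i => x1 i - x2 i with hu
  have hwi : ∀ i, w i = a * x1 i + b * x2 i := fun i => by
    rw [← hseg]; rfl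
  have hzero : ∀ i, w i = 0 → x1 i = 0 ∧ x2 i = 0 := by
    intro i hwi0
    have h1 : a * x1 i + b * x2 i = 0 := by rw [← hwi i]; exact hwi0
    have ha1 : 0 ≤ a * x1 i := mul_nonneg ha.le (hx1 i)
    have hb1 : 0 ≤ b * x2 i := mul_nonneg hb.le (hx2 i)
    constructor
    · have : a * x1 i = 0 := by linarith
      rcases mul_eq_zero.mp this with h | h
      · exact absurd h ha.ne'
      · exact h
    · have : b * x2 i = 0 := by linarith
      rcases mul_eq_zero.mp this with h | h
      · exact absurd h hb.ne'
      · exact h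
  have husum : ∑ i, u i • outer (φ i) = 0 := by
    have : ∑ i, u i • outer (φ i)
        = ∑ i, x1 i • outer (φ i) - ∑ i, x2 i • outer (φ i) := by
      rw [← Finset.sum_sub_distrib]
      exact Finset.sum_congr rfl fun i _ => by rw [hu, sub_smul]
    rw [this, hs1, hs2, sub_self]
  have husum0 : ∑ i, u i = 0 := by
    have ht := congrArg Matrix.trace husum
    rw [Matrix.trace_sum, Matrix.trace_zero] at ht
    have ht2 : ∑ i, ((u i : ℂ)) = 0 := by
      rw [← ht]
      refine Finset.sum_congr rfl fun i _ => ?_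
      rw [Matrix.trace_smul, trace_outer_eq_one (φ i) (hφ i)]
      simp [Complex.real_smul]
    exact_mod_cast ht2
  have hune : u ≠ 0 := by
    intro h
    apply hx12
    funext i
    have := congrFun h i
    simp [hu] at this
    linarith
  -- there is a negative coordinate of u
  have hexneg : ∃ i, u i < 0 := by
    by_contra hc
    push_neg at hc
    apply hune
    funext i
    exact (Finset.sum_eq_zero_iff_of_nonneg (fun i _ => hc i)).mp husum0 i (Finset.mem_univ i)
  -- positive support fact
  have hupos : ∀ i, u i ≠ 0 → 0 < w i := by
    intro i hui
    rcases lt_or_eq_of_le (hw i) with h | h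
    · exact h
    · exfalso
      obtain ⟨h1, h2⟩ := hzero i h.symm
      exact hui (by simp [hu, h1, h2])
  set S : Finset (Fin n) := Finset.univ.filter (fun i => u i < 0) with hS
  have hSne : S.Nonempty := by
    obtain ⟨i, hi⟩ := hexneg
    exact ⟨i, by simp [hS, hi]⟩
  set t : ℝ := S.inf' hSne (fun i => w i / (-u i)) with htdef
  have htpos : 0 < t := by
    rw [htdef, Finset.lt_inf'_iff]
    intro i hi
    have hui : u i < 0 := by simpa [hS] using hi
    exact div_pos (hupos i hui.ne) (neg_pos.mpr hui)
  obtain ⟨i0, hi0S, hi0⟩ := Finset.exists_mem_eq_inf' hSne (fun i => w i / (-u i))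
  have hui0 : u i0 < 0 := by simpa [hS] using hi0S
  set w' : Fin n → ℝ := fun i => w i + t * u i with hw'
  have hw'nonneg : ∀ i, 0 ≤ w' i := by
    intro i
    rcases lt_or_ge (u i) 0 with h | h
    · have hle : t ≤ w i / (-u i) := Finset.inf'_le _ (by simp [hS, h])
      have : t * (-u i) ≤ w i := by
        rw [← le_div_iff₀ (neg_pos.mpr h)]
        exact hle
      simp only [hw']
      nlinarith
    · have : 0 ≤ t * u i := mul_nonneg htpos.le h
      have := hw i
      simp only [hw']
      linarith
  have hw'i0 : w' i0 = 0 := by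
    have ht0 : t = w i0 / (-u i0) := htdef.trans hi0
    show w i0 + t * u i0 = 0
    rw [ht0]
    have h5 : u i0 / -u i0 = -1 := by rw [div_neg, div_self hui0.ne]
    rw [div_mul_eq_mul_div, mul_div_assoc, h5]
    ring
  have hw'sum : ∑ i, w' i • outer (φ i) = (d : ℝ)⁻¹ • (1 : Matrix (Fin d) (Fin d) ℂ) := by
    have : ∑ i, w' i • outer (φ i)
        = ∑ i, w i • outer (φ i) + t • ∑ i, u i • outer (φ i) := by
      rw [Finset.smul_sum, ← Finset.sum_add_distrib]
      refine Finset.sum_congr rfl fun i _ => ?_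
      rw [hw', smul_smul, ← add_smul]
    rw [this, husum, smul_zero, add_zero, hsum]
  have hw'supp : ∀ i, 0 < w' i → 0 < w i := by
    intro i h
    by_contra hc
    have hwi0 : w i = 0 := le_antisymm (not_lt.mp hc) (hw i)
    obtain ⟨h1, h2⟩ := hzero i hwi0
    have hui : u i = 0 := by simp [hu, h1, h2]
    have h' : 0 < w i + t * u i := h
    rw [hwi0, hui] at h'
    simp at h'
  set I : Finset (Fin n) := Finset.univ.filter (fun i => 0 < w' i) with hI
  have hIsub : (I : Set (Fin n)) ⊂ {i | 0 < w i} := by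
    constructor
    · intro i hi
      simp only [hI, Finset.coe_filter, Set.mem_setOf_eq] at hi
      exact hw'supp i hi.2
    · intro hc
      have : i0 ∈ ({i | 0 < w i} : Set (Fin n)) := hupos i0 hui0.ne
      have hmem := hc this
      simp only [hI, Finset.coe_filter, Set.mem_setOf_eq] at hmem
      rw [hw'i0] at hmem
      exact lt_irrefl 0 hmem.2
  refine hmin I hIsub ⟨fun i => (d : ℝ) * w' i, fun i => mul_nonneg (by positivity) (hw'nonneg i), ?_⟩
  have hcov : ∑ i ∈ I, w' i • outer (φ i) = ∑ i, w' i • outer (φ i) := by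
    refine Finset.sum_subset (Finset.subset_univ I) ?_
    intro i _ hiI
    have : ¬ 0 < w' i := by simpa [hI] using hiI
    have : w' i = 0 := le_antisymm (not_lt.mp this) (hw'nonneg i)
    rw [this, zero_smul]
  have hd0 : (d : ℝ) ≠ 0 := by positivity
  calc ∑ i ∈ I, ((d : ℝ) * w' i) • outer (φ i)
      = (d : ℝ) • ∑ i ∈ I, w' i • outer (φ i) := by
        rw [Finset.smul_sum]
        exact Finset.sum_congr rfl fun i _ => by rw [smul_smul]
    _ = (d : ℝ) • ((d : ℝ)⁻¹ • (1 : Matrix (Fin d) (Fin d) ℂ)) := by rw [hcov, hw'sum]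
    _ = 1 := by rw [smul_smul, mul_inv_cancel₀ hd0, one_smul]
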